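/- Let E be a 2×2 matrix whose entries are linear forms in variables x_1, …, x_c over ℂ, and suppose det(E) = x_1 x_3 − x_2². Then there exist invertible 2×2 complex matrices U, V such that U E V equals the symmetric matrix with rows (x_1, x_2) and (x_2, x_3). -/

import Mathlib

open MvPolynomial Matrix Finset



lemma degree_one_eq {c : ℕ} {d : Fin c →₀ ℕ} (hd : Finsupp.degree d = 1) :
    ∃ k, d = Finsupp.single k 1 := by
  classical
  have hne : d.support.Nonempty := by
    rcases Finset.eq_empty_or_nonempty d.support with h | h
    · exfalso; rw [Finsupp.support_eq_empty.mp h] at hd; simp at hd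
    · exact h
  obtain ⟨k, hk⟩ := hne
  refine ⟨k, ?_⟩
  have hdk : d k ≠ 0 := Finsupp.mem_support_iff.mp hk
  have hsum : ∑ i ∈ d.support, d i = 1 := hd
  have hle : d k ≤ 1 := by
    calc d k ≤ ∑ i ∈ d.support, d i := Finset.single_le_sum (fun i _ => Nat.zero_le _) hk
    _ = 1 := hsum
  have hdk1 : d k = 1 := le_antisymm hle (Nat.one_le_iff_ne_zero.mpr hdk)
  ext l
  by_cases hl : l = k
  · subst hl; simp [hdk1]
  · simp [Finsupp.single_apply, Ne.symm hl]
    by_contra hdl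
    have hlk : l ∈ d.support := Finsupp.mem_support_iff.mpr hdl
    have : 2 ≤ ∑ i ∈ d.support, d i := by
      have := Finset.add_sum_erase _ d hk
      have h2 : l ∈ d.support.erase k := Finset.mem_erase.mpr ⟨hl, hlk⟩
      have := Finset.single_le_sum (f := d) (fun i _ => Nat.zero_le _) h2
      omega
    omega

lemma lin_rep {c : ℕ} (p : MvPolynomial (Fin c) ℂ) (hp : p.IsHomogeneous 1) :
    p = ∑ k, C (coeff (Finsupp.single k 1) p) * X k := by
  classical
  ext m
  rw [coeff_sum]
  by_cases hm : Finsupp.degree m = 1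
  · obtain ⟨k, rfl⟩ := degree_one_eq hm
    rw [Finset.sum_eq_single k]
    · simp [coeff_C_mul, coeff_X']
    · intro b _ hb
      simp [coeff_C_mul, coeff_X', Finsupp.single_left_inj (one_ne_zero), hb]
    · simp
  · rw [hp.coeff_eq_zero hm]
    rw [Finset.sum_eq_zero]
    intro b _
    simp only [coeff_C_mul, coeff_X']
    rw [if_neg, mul_zero]
    intro h
    rw [← h] at hm
    rw [Finsupp.degree] at hm
    by_cases hb0 : (1:ℕ) = 0
    · simp at hb0
    · have := Finsupp.degree_single b 1
      exact hm this



abbrev M2 := Matrix (Fin 2) (Fin 2) ℂ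

example (a b : M2) : a*b*(a*b) = a*(b*a)*b := by noncomm_ring

lemma tr_det (M : M2) : det (M + 1) = det M + trace M + 1 := by
  simp [det_fin_two, trace_fin_two]; ring

lemma chsq (M : M2) (h1 : trace M = 0) : M * M = (-det M) • 1 := by
  rw [trace_fin_two] at h1
  rw [det_fin_two]
  ext i j
  fin_cases i <;> fin_cases j <;>
    simp [Matrix.mul_apply, Fin.sum_univ_two]
  · linear_combination (M 0 0) * h1
  · linear_combination (M 0 1) * h1
  · linear_combination (M 1 0) * h1
  · linear_combination (M 1 1) * h1

lemma core (A B Cc : M2)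
    (h1 : det A = 0) (h2 : det B = -1) (h3 : det Cc = 0)
    (h4 : det (A+B) = -1) (h5 : det (B+Cc) = -1) (h6 : det (A+Cc) = 1) :
    ∃ U W : M2, U.det ≠ 0 ∧ W.det ≠ 0 ∧
      U * A * W = !![1,0;0,0] ∧ U * B * W = !![0,1;1,0] ∧ U * Cc * W = !![0,0;0,1] ∧
      ∀ D : M2, det D = 0 → det (D + B) = -1 → det (D + A) = 0 → det (D + Cc) = 0 →
        U * D * W = 0 := by
  classical
  have hBu : IsUnit B.det := by rw [h2]; exact (isUnit_iff_ne_zero).mpr (by norm_num)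
  have hBB : B * B⁻¹ = 1 := mul_nonsing_inv _ hBu
  have hdetBinv : det B⁻¹ = -1 := by
    rw [det_nonsing_inv, h2]; simp [Ring.inverse_eq_inv']
  obtain ⟨N₀, hN₀⟩ : ∃ X : M2, X = A * B⁻¹ := ⟨_, rfl⟩
  obtain ⟨N₂, hN₂⟩ : ∃ X : M2, X = Cc * B⁻¹ := ⟨_, rfl⟩
  have dN₀ : det N₀ = 0 := by rw [hN₀, det_mul, h1, zero_mul]
  have dN₂ : det N₂ = 0 := by rw [hN₂, det_mul, h3, zero_mul]
  have hsplit : ∀ X : M2, (X + B) * B⁻¹ = X * B⁻¹ + 1 := by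
    intro X; rw [add_mul, hBB]
  have dN₀1 : det (N₀ + 1) = 1 := by
    rw [hN₀, ← hsplit A, det_mul, h4, hdetBinv]; norm_num
  have dN₂1 : det (N₂ + 1) = 1 := by
    have : Cc + B = B + Cc := add_comm _ _
    rw [hN₂, ← hsplit Cc, det_mul, this, h5, hdetBinv]; norm_num
  have tr₀ : trace N₀ = 0 := by
    have := tr_det N₀; rw [dN₀1, dN₀] at this; linear_combination -this
  have tr₂ : trace N₂ = 0 := by
    have := tr_det N₂; rw [dN₂1, dN₂] at this; linear_combination -this
  have dN₀₂ : det (N₀ + N₂) = -1 := by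
    have : (A + Cc) * B⁻¹ = N₀ + N₂ := by rw [hN₀, hN₂]; exact add_mul _ _ _
    rw [← this, det_mul, h6, hdetBinv]; norm_num
  have sq₀ : N₀ * N₀ = 0 := by rw [chsq N₀ tr₀, dN₀]; simp
  have sq₂ : N₂ * N₂ = 0 := by rw [chsq N₂ tr₂, dN₂]; simp
  have ha : N₀ * N₂ + N₂ * N₀ = 1 := by
    have htr : trace (N₀ + N₂) = 0 := by rw [trace_add, tr₀, tr₂]; ring
    have := chsq _ htr
    rw [dN₀₂, add_mul, mul_add, mul_add, sq₀, sq₂] at this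
    simpa using this
  have hN₂N₀ : N₂ * N₀ = 1 - N₀ * N₂ := eq_sub_of_add_eq' ha
  have pp : (N₀ * N₂) * (N₀ * N₂) = N₀ * N₂ := by
    calc (N₀*N₂) * (N₀*N₂) = N₀ * (N₂ * N₀) * N₂ := by noncomm_ring
    _ = N₀ * (1 - N₀ * N₂) * N₂ := by rw [hN₂N₀]
    _ = N₀ * N₂ - (N₀ * N₀) * (N₂ * N₂) := by noncomm_ring
    _ = N₀ * N₂ := by rw [sq₀]; simp
  have hpN : N₀ * (N₀ * N₂) = 0 := by rw [← mul_assoc, sq₀, zero_mul]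
  have hNp : N₀ * (N₂ * (N₀ * N₂)) = N₀ * N₂ := by
    calc N₀ * (N₂ * (N₀ * N₂)) = (N₀ * N₂) * (N₀ * N₂) := by noncomm_ring
    _ = N₀ * N₂ := pp
  have hN₂₂p : N₂ * (N₂ * (N₀ * N₂)) = 0 := by
    rw [← mul_assoc, sq₂, zero_mul]
  have hpne : N₀ * N₂ ≠ 0 := by
    intro h0
    have hone : N₂ * N₀ = 1 := by rw [hN₂N₀, h0, sub_zero]
    have : N₀ * N₂ = 1 := mul_eq_one_comm.mp hone
    rw [h0] at this
    exact one_ne_zero this.symm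
  obtain ⟨i, j, hij⟩ : ∃ i j, (N₀ * N₂) i j ≠ 0 := by
    by_contra h
    push_neg at h
    exact hpne (by ext i j; simpa using h i j)
  obtain ⟨G, hG⟩ : ∃ X : M2, X = !![(N₀*N₂) 0 j, (N₂*(N₀*N₂)) 0 j; (N₀*N₂) 1 j, (N₂*(N₀*N₂)) 1 j] := ⟨_, rfl⟩
  have z1 : ∀ i', N₀ i' 0 * (N₀*N₂) 0 j + N₀ i' 1 * (N₀*N₂) 1 j = 0 := by
    intro i'
    have := congrFun (congrFun hpN i') j
    simpa [Matrix.mul_apply, Fin.sum_univ_two] using this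
  have z2 : ∀ i', N₀ i' 0 * (N₂*(N₀*N₂)) 0 j + N₀ i' 1 * (N₂*(N₀*N₂)) 1 j = (N₀*N₂) i' j := by
    intro i'
    have := congrFun (congrFun hNp i') j
    simpa [Matrix.mul_apply, Fin.sum_univ_two] using this
  have z3 : ∀ i', N₂ i' 0 * (N₂*(N₀*N₂)) 0 j + N₂ i' 1 * (N₂*(N₀*N₂)) 1 j = 0 := by
    intro i'
    have := congrFun (congrFun hN₂₂p i') j
    simpa [Matrix.mul_apply, Fin.sum_univ_two] using this
  have e01G : N₀ * G = G * !![0,1;0,0] := by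
    ext i' l
    fin_cases i' <;> fin_cases l <;>
      simp [hG, Matrix.mul_apply, Fin.sum_univ_two]
    · simpa [Matrix.mul_apply, Fin.sum_univ_two] using z1 0
    · simpa [Matrix.mul_apply, Fin.sum_univ_two] using z2 0
    · simpa [Matrix.mul_apply, Fin.sum_univ_two] using z1 1
    · simpa [Matrix.mul_apply, Fin.sum_univ_two] using z2 1
  have e10G : N₂ * G = G * !![0,0;1,0] := by
    ext i' l
    fin_cases i' <;> fin_cases l <;>
      simp [hG, Matrix.mul_apply, Fin.sum_univ_two]
    · simpa [Matrix.mul_apply, Fin.sum_univ_two] using z3 0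
    · simpa [Matrix.mul_apply, Fin.sum_univ_two] using z3 1
  have hdG : det G ≠ 0 := by
    intro hdG0
    obtain ⟨v, hv0, hGv⟩ := (Matrix.exists_mulVec_eq_zero_iff).mpr hdG0
    have h1' : (G * !![0,1;0,0]) *ᵥ v = 0 := by
      rw [← e01G, ← Matrix.mulVec_mulVec, hGv, Matrix.mulVec_zero]
    have hv1 : v 1 = 0 := by
      have h2' := congrFun h1' i
      rw [hG] at h2'
      fin_cases i <;>
        simp [Matrix.mulVec, dotProduct, Matrix.mul_apply, Fin.sum_univ_two, Matrix.vecHead, Matrix.vecTail] at h2'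
      · exact h2'.resolve_left (by simpa [Matrix.mul_apply, Fin.sum_univ_two] using hij)
      · exact h2'.resolve_left (by simpa [Matrix.mul_apply, Fin.sum_univ_two] using hij)
    have hv0' : v 0 = 0 := by
      have h3' := congrFun hGv i
      rw [hG] at h3'
      fin_cases i <;>
        simp [Matrix.mulVec, dotProduct, Matrix.mul_apply, Fin.sum_univ_two, Matrix.vecHead, Matrix.vecTail, hv1] at h3'
      · exact h3'.resolve_left (by simpa [Matrix.mul_apply, Fin.sum_univ_two] using hij)
      · exact h3'.resolve_left (by simpa [Matrix.mul_apply, Fin.sum_univ_two] using hij)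
    apply hv0
    funext l
    fin_cases l
    · simpa using hv0'
    · simpa using hv1
  have hGu : IsUnit G.det := isUnit_iff_ne_zero.mpr hdG
  have hGG : G * G⁻¹ = 1 := mul_nonsing_inv _ hGu
  have hGG' : G⁻¹ * G = 1 := nonsing_inv_mul _ hGu
  have he01 : G⁻¹ * (N₀ * G) = !![0,1;0,0] := by
    rw [e01G, ← mul_assoc, hGG', one_mul]
  have he10 : G⁻¹ * (N₂ * G) = !![0,0;1,0] := by
    rw [e10G, ← mul_assoc, hGG', one_mul]
  have key : ∀ X Y : M2, Y = X * B⁻¹ →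
      G⁻¹ * X * (B⁻¹ * (G * !![0,1;1,0])) = (G⁻¹ * (Y * G)) * !![0,1;1,0] := by
    intro X Y hXY
    rw [hXY]
    simp only [Matrix.mul_assoc]
  have detGinv : det (G⁻¹) = (det G)⁻¹ := by
    rw [det_nonsing_inv, Ring.inverse_eq_inv']
  have detconj : ∀ X : M2, det (G⁻¹ * (X * G)) = det X := by
    intro X
    rw [det_mul, det_mul, detGinv]
    field_simp
  refine ⟨G⁻¹, B⁻¹ * (G * !![0,1;1,0]), ?_, ?_, ?_, ?_, ?_, ?_⟩
  · rw [detGinv]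
    exact inv_ne_zero hdG
  · rw [det_mul, det_mul, hdetBinv, det_fin_two_of]
    intro h
    apply hdG
    have : det G * (0 * 0 - 1 * 1) = 0 := by linear_combination -h
    simpa using this
  · rw [key A N₀ hN₀, he01]
    ext i' l
    fin_cases i' <;> fin_cases l <;> norm_num [Matrix.mul_apply, Fin.sum_univ_two]
  · have hB1 : (1 : M2) = B * B⁻¹ := hBB.symm
    rw [key B 1 hB1, one_mul, hGG', one_mul]
  · rw [key Cc N₂ hN₂, he10]
    ext i' l
    fin_cases i' <;> fin_cases l <;> norm_num [Matrix.mul_apply, Fin.sum_univ_two]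
  · intro D hD1 hD2 hD3 hD4
    obtain ⟨ND, hND⟩ : ∃ X : M2, X = D * B⁻¹ := ⟨_, rfl⟩
    have dND : det ND = 0 := by rw [hND, det_mul, hD1, zero_mul]
    have dND1 : det (ND + 1) = 1 := by
      rw [hND, ← hsplit D, det_mul, hD2, hdetBinv]; norm_num
    have trND : trace ND = 0 := by
      have := tr_det ND; rw [dND1, dND] at this; linear_combination -this
    have dNDA : det (ND + N₀) = 0 := by
      have : (D + A) * B⁻¹ = ND + N₀ := by rw [hND, hN₀]; exact add_mul _ _ _
      rw [← this, det_mul, hD3, zero_mul]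
    have dNDC : det (ND + N₂) = 0 := by
      have : (D + Cc) * B⁻¹ = ND + N₂ := by rw [hND, hN₂]; exact add_mul _ _ _
      rw [← this, det_mul, hD4, zero_mul]
    obtain ⟨M, hM⟩ : ∃ X : M2, X = G⁻¹ * (ND * G) := ⟨_, rfl⟩
    have dM : det M = 0 := by rw [hM, detconj, dND]
    have trM : trace M = 0 := by
      rw [hM, ← mul_assoc, trace_mul_comm, ← mul_assoc, hGG, one_mul, trND]
    have dMe01 : det (M + !![0,1;0,0]) = 0 := by
      have : M + !![0,1;0,0] = G⁻¹ * ((ND + N₀) * G) := by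
        rw [hM, ← he01, add_mul, mul_add]
      rw [this, detconj, dNDA]
    have dMe10 : det (M + !![0,0;1,0]) = 0 := by
      have : M + !![0,0;1,0] = G⁻¹ * ((ND + N₂) * G) := by
        rw [hM, ← he10, add_mul, mul_add]
      rw [this, detconj, dNDC]
    rw [det_fin_two] at dM
    rw [trace_fin_two] at trM
    rw [det_fin_two] at dMe01 dMe10
    simp [Matrix.add_apply] at dMe01 dMe10
    have q10 : M 1 0 = 0 := by linear_combination dM - dMe01
    have q01 : M 0 1 = 0 := by linear_combination dM - dMe10
    have q00 : M 0 0 = 0 := by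
      have h00 : M 0 0 * M 0 0 = 0 := by
        linear_combination M 0 0 * trM - dM - M 1 0 * q01
      exact mul_self_eq_zero.mp h00
    have q11 : M 1 1 = 0 := by linear_combination trM - q00
    have hM0 : M = 0 := by
      ext i' l
      fin_cases i' <;> fin_cases l <;> simpa using by assumption
    rw [key D ND hND, ← hM, hM0, zero_mul]


theorem stmt5 (c : ℕ) (hc : 3 ≤ c)
    (E : Matrix (Fin 2) (Fin 2) (MvPolynomial (Fin c) ℂ))
    (hlin : ∀ i j, (E i j).IsHomogeneous 1)
    (hdet : E.det = X (⟨0, by omega⟩ : Fin c) * X ⟨2, by omega⟩ - X ⟨1, by omega⟩ ^ 2) :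
    ∃ U V : GL (Fin 2) ℂ,
      (U : Matrix (Fin 2) (Fin 2) ℂ).map MvPolynomial.C * E *
        (V : Matrix (Fin 2) (Fin 2) ℂ).map MvPolynomial.C =
      !![X (⟨0, by omega⟩ : Fin c), X ⟨1, by omega⟩; X ⟨1, by omega⟩, X ⟨2, by omega⟩] := by
  classical
  obtain ⟨i0, hi0⟩ : ∃ x : Fin c, x = ⟨0, by omega⟩ := ⟨_, rfl⟩
  obtain ⟨i1, hi1⟩ : ∃ x : Fin c, x = ⟨1, by omega⟩ := ⟨_, rfl⟩
  obtain ⟨i2, hi2⟩ : ∃ x : Fin c, x = ⟨2, by omega⟩ := ⟨_, rfl⟩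
  have h01 : i0 ≠ i1 := by rw [hi0, hi1]; simp [Fin.ext_iff]
  have h02 : i0 ≠ i2 := by rw [hi0, hi2]; simp [Fin.ext_iff]
  have h12 : i1 ≠ i2 := by rw [hi1, hi2]; simp [Fin.ext_iff]
  obtain ⟨a, ha⟩ : ∃ a : Fin c → M2, a = fun k =>
      Matrix.of fun i j => MvPolynomial.coeff (Finsupp.single k 1) (E i j) := ⟨_, rfl⟩
  have hE : ∀ i j, E i j = ∑ k, MvPolynomial.C (a k i j) * X k := by
    intro i j
    rw [ha]
    exact lin_rep _ (hlin i j)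
  have hdet2 : ∀ x : Fin c → ℂ, det (Matrix.of fun i j => ∑ k, a k i j * x k)
      = x i0 * x i2 - x i1 ^ 2 := by
    intro x
    have h := congrArg (eval x) hdet
    rw [RingHom.map_det, RingHom.mapMatrix_apply] at h
    have hmap : E.map (eval x) = Matrix.of fun i j => ∑ k, a k i j * x k := by
      ext i j
      rw [Matrix.map_apply, hE i j]
      simp
    rw [hmap] at h
    rw [h, hi0, hi1, hi2]
    simp
  have hsum1 : ∀ k : Fin c, (Matrix.of fun i j => ∑ l, a l i j * (Pi.single k (1:ℂ) : Fin c → ℂ) l) = a k := by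
    intro k
    ext i j
    simp [Pi.single_apply]
  have hsum2 : ∀ k m : Fin c, k ≠ m →
      (Matrix.of fun i j => ∑ l, a l i j * ((Pi.single k (1:ℂ) : Fin c → ℂ) + (Pi.single m (1:ℂ) : Fin c → ℂ)) l) = a k + a m := by
    intro k m hkm
    ext i j
    simp [Pi.single_apply, mul_add, Finset.sum_add_distrib, hkm]
  have evalk : ∀ k : Fin c, det (a k) =
      (Pi.single k (1:ℂ) : Fin c → ℂ) i0 * (Pi.single k (1:ℂ) : Fin c → ℂ) i2
        - (Pi.single k (1:ℂ) : Fin c → ℂ) i1 ^ 2 := by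
    intro k
    rw [← hsum1 k]
    exact hdet2 _
  have evalkm : ∀ k m : Fin c, k ≠ m → det (a k + a m) =
      ((Pi.single k (1:ℂ) : Fin c → ℂ) + (Pi.single m (1:ℂ) : Fin c → ℂ)) i0 *
        ((Pi.single k (1:ℂ) : Fin c → ℂ) + (Pi.single m (1:ℂ) : Fin c → ℂ)) i2
      - ((Pi.single k (1:ℂ) : Fin c → ℂ) + (Pi.single m (1:ℂ) : Fin c → ℂ)) i1 ^ 2 := by
    intro k m hkm
    rw [← hsum2 k m hkm]
    exact hdet2 _
  have F1 : det (a i0) = 0 := by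
    rw [evalk i0]
    simp [Pi.single_apply, h01.symm, h02.symm]
  have F2 : det (a i1) = -1 := by
    rw [evalk i1]
    simp [Pi.single_apply, h01, h12.symm]
  have F3 : det (a i2) = 0 := by
    rw [evalk i2]
    simp [Pi.single_apply, h02, h12]
  have F4 : det (a i0 + a i1) = -1 := by
    rw [evalkm i0 i1 h01]
    simp [Pi.single_apply, h01, h02, h12, h01.symm, h02.symm, h12.symm]
  have F5 : det (a i1 + a i2) = -1 := by
    rw [evalkm i1 i2 h12]
    simp [Pi.single_apply, h01, h02, h12, h01.symm, h02.symm, h12.symm]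
  have F6 : det (a i0 + a i2) = 1 := by
    rw [evalkm i0 i2 h02]
    simp [Pi.single_apply, h01, h02, h12, h01.symm, h02.symm, h12.symm]
  obtain ⟨U, W, hU, hW, hUA, hUB, hUC, hUD⟩ := core (a i0) (a i1) (a i2) F1 F2 F3 F4 F5 F6
  have hval : ∀ k : Fin c, k ≠ i0 → k ≠ i1 → k ≠ i2 → U * a k * W = 0 := by
    intro k hk0 hk1 hk2
    apply hUD
    · rw [evalk k]
      simp [Pi.single_apply, hk0, hk1, hk2]
    · rw [evalkm k i1 hk1]
      simp [Pi.single_apply, hk0, hk1, hk2, h01, h02, h12, h01.symm, h02.symm, h12.symm]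
    · rw [evalkm k i0 hk0]
      simp [Pi.single_apply, hk0, hk1, hk2, h01, h02, h12, h01.symm, h02.symm, h12.symm]
    · rw [evalkm k i2 hk2]
      simp [Pi.single_apply, hk0, hk1, hk2, h01, h02, h12, h01.symm, h02.symm, h12.symm]
  have ent : ∀ i j, ((U.map MvPolynomial.C * E * W.map MvPolynomial.C :
        Matrix (Fin 2) (Fin 2) (MvPolynomial (Fin c) ℂ))) i j
      = ∑ k, MvPolynomial.C ((U * a k * W) i j) * X k := by
    intro i j
    simp only [Matrix.mul_apply, Matrix.map_apply, hE, Fin.sum_univ_two,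
      Finset.mul_sum, Finset.sum_mul, ← Finset.sum_add_distrib]
    apply Finset.sum_congr rfl
    intro k _
    simp only [Matrix.mul_apply, Fin.sum_univ_two, _root_.map_add, _root_.map_mul]
    ring
  refine ⟨Matrix.GeneralLinearGroup.mkOfDetNeZero U hU,
    Matrix.GeneralLinearGroup.mkOfDetNeZero W hW, ?_⟩
  have hcoeU : ((Matrix.GeneralLinearGroup.mkOfDetNeZero U hU : GL (Fin 2) ℂ) :
      Matrix (Fin 2) (Fin 2) ℂ) = U := rfl
  have hcoeW : ((Matrix.GeneralLinearGroup.mkOfDetNeZero W hW : GL (Fin 2) ℂ) :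
      Matrix (Fin 2) (Fin 2) ℂ) = W := rfl
  rw [hcoeU, hcoeW]
  have hred : ∀ i j, ∑ k, MvPolynomial.C ((U * a k * W) i j) * X k
      = MvPolynomial.C ((U * a i0 * W) i j) * X i0 + MvPolynomial.C ((U * a i1 * W) i j) * X i1
        + MvPolynomial.C ((U * a i2 * W) i j) * X i2 := by
    intro i j
    have hsub : ({i0, i1, i2} : Finset (Fin c)) ⊆ Finset.univ := Finset.subset_univ _
    rw [← Finset.sum_subset hsub]
    · rw [Finset.sum_insert (by simp [h01, h02]), Finset.sum_insert (by simp [h12]),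
        Finset.sum_singleton, add_assoc]
    · intro k _ hk
      simp only [Finset.mem_insert, Finset.mem_singleton, not_or] at hk
      rw [hval k hk.1 hk.2.1 hk.2.2]
      simp
  ext i j
  rw [ent i j, hred i j, hUA, hUB, hUC, ← hi0, ← hi1, ← hi2]
  fin_cases i <;> fin_cases j <;> simp
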